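/- A nonempty topological space X is homeomorphic to the space of irrational numbers ℝ \ ℚ if and only if X is separable, completely metrizable, zero-dimensional, and nowhere compact (no nonempty open subset has compact closure). -/

import Mathlib

open TopologicalSpace Topology Metric Set

universe u
variable {X : Type u}

noncomputable def ptOrder [TopologicalSpace X] (p : X) : Cardinal :=
  Cardinal.mk (ConnectedComponents (({p}ᶜ : Set X)))

def endpoints (X : Type u) [TopologicalSpace X] : Set X := {p | ptOrder p = 1}

def ramificationPoints (X : Type u) [TopologicalSpace X] : Set X := {p | 3 ≤ ptOrder p}

def IsSubcontinuum [TopologicalSpace X] (A : Set X) : Prop := IsClosed A ∧ IsConnected A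

def NoSimpleClosedCurve (X : Type u) [TopologicalSpace X] : Prop :=
  ¬ ∃ f : AddCircle (1 : ℝ) → X, IsEmbedding f

def NCstar (X : Type u) [MetricSpace X] : Set (NonemptyCompacts X) :=
  {A | IsConnected (A : Set X) ∧ IsPreconnected ((A : Set X)ᶜ)}

def IsArc [TopologicalSpace X] (A : Set X) (x y : X) : Prop :=
  ∃ f : Set.Icc (0 : ℝ) 1 → X, IsEmbedding f ∧ Set.range f = A ∧
    f ⟨0, by norm_num⟩ = x ∧ f ⟨1, by norm_num⟩ = y

def IsFiniteGraph (X : Type u) [TopologicalSpace X] : Prop :=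
  ∃ (n : ℕ) (A : Fin n → Set X) (e₀ e₁ : Fin n → X),
    (∀ i, IsArc (A i) (e₀ i) (e₁ i)) ∧ (⋃ i, A i) = Set.univ ∧
    ∀ i j, i ≠ j → A i ∩ A j ⊆ ({e₀ i, e₁ i} : Set X) ∩ {e₀ j, e₁ j}

def ZeroDim (Y : Type*) [TopologicalSpace Y] : Prop :=
  ∀ (y : Y) (U : Set Y), IsOpen U → y ∈ U → ∃ V : Set Y, IsClopen V ∧ y ∈ V ∧ V ⊆ U

def NowhereCompact (Y : Type*) [TopologicalSpace Y] : Prop :=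
  ∀ U : Set Y, IsOpen U → U.Nonempty → ¬ IsCompact (closure U)

open Classical PiNat
set_option linter.unusedSectionVars false
set_option maxHeartbeats 1000000

section IrrFacts

local notation "Irr" => {x : ℝ // Irrational x}

instance : Nonempty Irr := ⟨⟨Real.sqrt 2, irrational_sqrt_two⟩⟩

noncomputable def irrEmb : Irr → ℝ × (ℚ → ℝ) :=
  fun x => (x.1, fun q => 1 / dist x.1 (q : ℝ))

theorem irrEmb_cont : Continuous irrEmb := by
  refine Continuous.prodMk continuous_subtype_val (continuous_pi fun q => ?_)
  exact continuous_const.div (continuous_subtype_val.dist continuous_const)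
    (fun x => dist_ne_zero.2 (x.2.ne_rat q))

theorem range_irrEmb :
    Set.range irrEmb = ⋂ q : ℚ, {p : ℝ × (ℚ → ℝ) | p.2 q * dist p.1 (q : ℝ) = 1} := by
  ext p
  simp only [mem_range, mem_iInter, mem_setOf_eq]
  constructor
  · rintro ⟨x, rfl⟩ q
    exact one_div_mul_cancel (dist_ne_zero.2 (x.2.ne_rat q))
  · intro h
    have hx : Irrational p.1 := by
      rw [Irrational]
      rintro ⟨q, hq⟩
      have := h q
      rw [← hq, dist_self, mul_zero] at this
      exact zero_ne_one this
    refine ⟨⟨p.1, hx⟩, ?_⟩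
    show (p.1, fun q : ℚ => 1 / dist p.1 (q:ℝ)) = p
    have : (fun q : ℚ => 1 / dist p.1 (q : ℝ)) = p.2 := by
      funext q
      have hd : dist p.1 (q : ℝ) ≠ 0 := dist_ne_zero.2 (hx.ne_rat q)
      field_simp
      linarith [h q]
    rw [this]

instance polish_irr : PolishSpace Irr := by
  have hemb : Topology.IsClosedEmbedding irrEmb := by
    constructor
    · constructor
      · exact IsInducing.of_comp irrEmb_cont continuous_fst IsInducing.subtypeVal
      · intro x y hxy
        exact Subtype.val_injective (congrArg Prod.fst hxy)
    · rw [range_irrEmb]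
      exact isClosed_iInter fun q => isClosed_eq
        (((continuous_apply q).comp continuous_snd).mul (continuous_fst.dist continuous_const))
        continuous_const
  exact hemb.polishSpace

theorem zeroDim_irr : ZeroDim Irr := by
  intro y U hU hyU
  obtain ⟨ε, hε, hball⟩ := Metric.isOpen_iff.1 hU y hyU
  obtain ⟨a, ha1, ha2⟩ := exists_rat_btwn (show y.1 - ε < y.1 by linarith)
  obtain ⟨b, hb1, hb2⟩ := exists_rat_btwn (show y.1 < y.1 + ε by linarith)
  refine ⟨{x : Irr | (a : ℝ) < x.1 ∧ x.1 < (b : ℝ)}, ⟨?_, ?_⟩, ⟨ha2, hb1⟩, ?_⟩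
  · -- closed
    have : {x : Irr | (a : ℝ) < x.1 ∧ x.1 < (b : ℝ)}
        = Subtype.val ⁻¹' (Icc (a : ℝ) (b : ℝ)) := by
      ext x
      simp only [mem_setOf_eq, mem_preimage, mem_Icc]
      constructor
      · exact fun h => ⟨h.1.le, h.2.le⟩
      · rintro ⟨h1, h2⟩
        exact ⟨h1.lt_of_ne' (x.2.ne_rat a).symm.symm ,
          h2.lt_of_ne (x.2.ne_rat b)⟩
    rw [this]
    exact isClosed_Icc.preimage continuous_subtype_val
  · -- open
    exact (isOpen_Ioo.preimage continuous_subtype_val :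
      IsOpen (Subtype.val ⁻¹' Ioo (a:ℝ) (b:ℝ)))
  · intro x hx
    apply hball
    simp only [mem_ball, Subtype.dist_eq, Real.dist_eq, abs_lt]
    obtain ⟨h1, h2⟩ := hx
    constructor <;> nlinarith

theorem nowhereCompact_irr : NowhereCompact Irr := by
  intro U hU hUne hK
  obtain ⟨x, hxU⟩ := hUne
  obtain ⟨ε, hε, hball⟩ := Metric.isOpen_iff.1 hU x hxU
  -- pick a rational near x
  obtain ⟨q, hq1, hq2⟩ := exists_rat_btwn (show x.1 < x.1 + ε/2 by linarith)
  have hqball : dist (q : ℝ) x.1 < ε := by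
    rw [Real.dist_eq, abs_lt]; constructor <;> nlinarith
  -- the image of the closure is compact and closed in ℝ
  have hKc : IsCompact (Subtype.val '' (closure U : Set Irr)) :=
    hK.image continuous_subtype_val
  have hKclosed : IsClosed (Subtype.val '' (closure U : Set Irr)) := hKc.isClosed
  -- q is in the closure of the image of U
  have hqcl : (q : ℝ) ∈ closure (Subtype.val '' U) := by
    rw [Metric.mem_closure_iff]
    intro η hη
    set r : ℝ := min η (ε - dist (q:ℝ) x.1) with hr
    have hr0 : 0 < r := lt_min hη (by linarith)
    obtain ⟨z, hz, hz1, hz2⟩ := exists_irrational_btwn (show (q:ℝ) < q + r by linarith)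
    have hzball : (⟨z, hz⟩ : Irr) ∈ ball x ε := by
      simp only [mem_ball, Subtype.dist_eq, Real.dist_eq]
      have h1 : |z - (q:ℝ)| < r := by rw [abs_lt]; constructor <;> nlinarith
      calc |z - x.1| ≤ |z - (q:ℝ)| + |(q:ℝ) - x.1| := abs_sub_le _ _ _
        _ < r + dist (q:ℝ) x.1 := by rw [Real.dist_eq] at *; linarith
        _ ≤ (ε - dist (q:ℝ) x.1) + dist (q:ℝ) x.1 := by
            have := min_le_right η (ε - dist (q:ℝ) x.1); linarith
        _ = ε := by ring
    refine ⟨z, ⟨⟨z, hz⟩, hball hzball, rfl⟩, ?_⟩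
    rw [Real.dist_eq, abs_lt]
    have := min_le_left η (ε - dist (q:ℝ) x.1)
    constructor <;> nlinarith
  have : (q : ℝ) ∈ Subtype.val '' (closure U : Set Irr) := by
    apply closure_minimal ?_ hKclosed hqcl
    exact image_mono subset_closure
  obtain ⟨w, _, hw⟩ := this
  exact w.2 ⟨q, hw.symm⟩

end IrrFacts

section Split

variable {Z : Type*} [MetricSpace Z] [CompleteSpace Z] [SecondCountableTopology Z]

theorem split_lemma (hZD : ZeroDim Z) (hNC : NowhereCompact Z) {C : Set Z}
    (hCne : C.Nonempty) (hC : IsClopen C) {ε : ℝ} (hε : 0 < ε) :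
    ∃ D : ℕ → Set Z, (∀ n, (D n).Nonempty) ∧ (∀ n, IsClopen (D n)) ∧ (∀ n, D n ⊆ C) ∧
      (∀ n, ∀ a ∈ D n, ∀ b ∈ D n, dist a b ≤ ε) ∧
      Pairwise (Function.onFun Disjoint D) ∧ (⋃ n, D n) = C := by
  -- C is not compact
  have hnotc : ¬ IsCompact C := by
    intro h
    exact hNC C hC.isOpen hCne (by rwa [hC.isClosed.closure_eq])
  have hnotTB : ¬ TotallyBounded C := fun h =>
    hnotc (TotallyBounded.isCompact_of_isClosed h hC.isClosed)
  rw [totallyBounded_iff] at hnotTB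
  push_neg at hnotTB
  obtain ⟨δ, hδ, hδ'⟩ := hnotTB
  set r : ℝ := min (ε / 2) (δ / 2) with hrdef
  have hr : 0 < r := lt_min (by linarith) (by linarith)
  -- zero-dim cover
  have hV : ∀ y : C, ∃ V : Set Z, IsClopen V ∧ (y : Z) ∈ V ∧ V ⊆ C ∩ ball (y : Z) r := by
    intro y
    exact hZD y (C ∩ ball (y : Z) r) (hC.isOpen.inter isOpen_ball)
      ⟨y.2, mem_ball_self hr⟩
  choose V hVclopen hVmem hVsub using hV
  have hVunion : ⋃ y : C, V y = C := by
    apply subset_antisymm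
    · exact iUnion_subset fun y => (hVsub y).trans inter_subset_left
    · intro x hx
      exact mem_iUnion.2 ⟨⟨x, hx⟩, hVmem ⟨x, hx⟩⟩
  obtain ⟨T, hTc, hTu⟩ := TopologicalSpace.isOpen_iUnion_countable V
    (fun y => (hVclopen y).isOpen)
  have hTne : T.Nonempty := by
    rcases hCne with ⟨x, hx⟩
    by_contra h
    rw [not_nonempty_iff_eq_empty] at h
    rw [h] at hTu
    simp only [mem_empty_iff_false, iUnion_of_empty, iUnion_empty] at hTu
    rw [hVunion] at hTu
    rw [← hTu] at hx
    exact hx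
  obtain ⟨u, hu⟩ := hTc.exists_surjective hTne
  -- the countable cover
  set W : ℕ → Set Z := fun n => V (u n).1 with hWdef
  have hWclopen : ∀ n, IsClopen (W n) := fun n => hVclopen _
  have hWsub : ∀ n, W n ⊆ C ∩ ball ((u n : C) : Z) r := fun n => hVsub _
  have hWunion : ⋃ n, W n = C := by
    apply subset_antisymm
    · exact iUnion_subset fun n => (hWsub n).trans inter_subset_left
    · intro x hx
      have : x ∈ ⋃ y ∈ T, V y := by
        rw [hTu, hVunion]; exact hx
      obtain ⟨y, hyT, hyV⟩ := mem_iUnion₂.1 this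
      obtain ⟨n, hn⟩ := hu ⟨y, hyT⟩
      exact mem_iUnion.2 ⟨n, by rw [hWdef]; simp only; rw [hn]; exact hyV⟩
  -- disjointify
  set D' : ℕ → Set Z := fun n => W n \ ⋃ m ∈ Finset.range n, W m with hD'def
  have hD'clopen : ∀ n, IsClopen (D' n) :=
    fun n => (hWclopen n).diff (Set.Finite.isClopen_biUnion (Finset.range n).finite_toSet
      (fun m _ => hWclopen m))
  have hD'subW : ∀ n, D' n ⊆ W n := fun n => diff_subset
  have hD'disj : Pairwise (Function.onFun Disjoint D') := by
    intro m n hmn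
    wlog h : m < n generalizing m n
    · exact (this hmn.symm (by omega)).symm
    rw [Function.onFun, disjoint_left]
    rintro x hxm ⟨hxn, hxnot⟩
    exact hxnot (mem_biUnion (Finset.mem_range.2 h) (hD'subW m hxm))
  have hD'union : ⋃ n, D' n = C := by
    rw [← hWunion]
    apply subset_antisymm
    · exact iUnion_subset fun n => (hD'subW n).trans (subset_iUnion _ n)
    · intro x hx
      classical
      have hex : ∃ n, x ∈ W n := mem_iUnion.1 hx
      set n := Nat.find hex with hn
      refine mem_iUnion.2 ⟨n, Nat.find_spec hex, ?_⟩
      intro hmem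
      obtain ⟨m, hm, hxm⟩ := mem_iUnion₂.1 hmem
      exact Nat.find_min hex (Finset.mem_range.1 hm) hxm
  -- infinitely many nonempty pieces
  set p : ℕ → Prop := fun n => (D' n).Nonempty with hpdef
  have hpinf : (setOf p).Infinite := by
    intro hfin
    apply hδ' ((fun n => ((u n : C) : Z)) '' (setOf p)) (hfin.image _)
    intro x hx
    have : x ∈ ⋃ n, D' n := by rw [hD'union]; exact hx
    obtain ⟨n, hn⟩ := mem_iUnion.1 this
    have hnp : n ∈ setOf p := ⟨x, hn⟩
    refine mem_biUnion (mem_image_of_mem _ hnp) ?_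
    have := (hWsub n (hD'subW n hn)).2
    exact mem_ball.2 (lt_of_lt_of_le (mem_ball.1 this) (by
      rw [hrdef]; calc min (ε/2) (δ/2) ≤ δ/2 := min_le_right _ _
        _ ≤ δ := by linarith))
  -- final family
  refine ⟨fun k => D' (Nat.nth p k), fun k => Nat.nth_mem_of_infinite hpinf k,
    fun k => hD'clopen _, fun k => ((hD'subW _).trans ((hWsub _).trans inter_subset_left)),
    ?_, ?_, ?_⟩
  · intro k a ha b hb
    have ha' := (hWsub _ (hD'subW _ ha)).2
    have hb' := (hWsub _ (hD'subW _ hb)).2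
    have : dist a b < ε := by
      calc dist a b ≤ dist a ((u (Nat.nth p k) : C) : Z) + dist ((u (Nat.nth p k) : C) : Z) b :=
            dist_triangle _ _ _
        _ < r + r := by
            rw [dist_comm ((u (Nat.nth p k) : C) : Z) b]
            exact add_lt_add (mem_ball.1 ha') (mem_ball.1 hb')
        _ ≤ ε := by
            have : r ≤ ε / 2 := min_le_left _ _
            linarith
    exact this.le
  · intro i j hij
    exact hD'disj (fun h => hij (Nat.nth_injective hpinf h))
  · rw [← hD'union]
    apply subset_antisymm
    · exact iUnion_subset fun k => subset_iUnion D' _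
    · intro x hx
      obtain ⟨n, hn⟩ := mem_iUnion.1 hx
      have hnp : p n := ⟨x, hn⟩
      have : n ∈ range (Nat.nth p) := by rw [Nat.range_nth_of_infinite hpinf]; exact hnp
      obtain ⟨k, hk⟩ := this
      exact mem_iUnion.2 ⟨k, by rw [hk]; exact hn⟩

end Split

section Key
variable {Z : Type*} [MetricSpace Z] [CompleteSpace Z] [SecondCountableTopology Z]

variable (hZD : ZeroDim Z) (hNC : NowhereCompact Z)

/-- split a clopen set into pieces, junk value if not clopen/nonempty -/
noncomputable def splitD (C : Set Z) (k : ℕ) : ℕ → Set Z :=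
  if h : C.Nonempty ∧ IsClopen C then
    (split_lemma hZD hNC h.1 h.2 (pow_pos (by norm_num : (0:ℝ) < 1/2) k)).choose
  else fun _ => ∅

theorem splitD_spec {C : Set Z} (hne : C.Nonempty) (hcl : IsClopen C) (k : ℕ) :
    (∀ n, (splitD hZD hNC C k n).Nonempty) ∧ (∀ n, IsClopen (splitD hZD hNC C k n)) ∧
      (∀ n, splitD hZD hNC C k n ⊆ C) ∧
      (∀ n, ∀ a ∈ splitD hZD hNC C k n, ∀ b ∈ splitD hZD hNC C k n, dist a b ≤ (1/2)^k) ∧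
      Pairwise (Function.onFun Disjoint (splitD hZD hNC C k)) ∧ (⋃ n, splitD hZD hNC C k n) = C := by
  classical
  rw [splitD, dif_pos ⟨hne, hcl⟩]
  exact (split_lemma hZD hNC hne hcl (pow_pos (by norm_num : (0:ℝ) < 1/2) k)).choose_spec

noncomputable def scheme : List ℕ → Set Z
  | [] => univ
  | n :: s => splitD hZD hNC (scheme s) s.length n

variable [Nonempty Z]

theorem scheme_ne_clopen : ∀ s : List ℕ, (scheme hZD hNC s).Nonempty ∧ IsClopen (scheme hZD hNC s) := by
  intro s
  induction s with
  | nil => exact ⟨univ_nonempty, isClopen_univ⟩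
  | cons n s ih =>
    obtain ⟨h1, h2⟩ := splitD_spec hZD hNC ih.1 ih.2 s.length
    exact ⟨h1 n, h2.1 n⟩

theorem scheme_sub (n : ℕ) (s : List ℕ) : scheme hZD hNC (n :: s) ⊆ scheme hZD hNC s :=
  (splitD_spec hZD hNC (scheme_ne_clopen hZD hNC s).1 (scheme_ne_clopen hZD hNC s).2 s.length).2.2.1 n

theorem scheme_dist (n : ℕ) (s : List ℕ) {a b : Z} (ha : a ∈ scheme hZD hNC (n :: s))
    (hb : b ∈ scheme hZD hNC (n :: s)) : dist a b ≤ (1/2)^(s.length) :=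
  (splitD_spec hZD hNC (scheme_ne_clopen hZD hNC s).1 (scheme_ne_clopen hZD hNC s).2 s.length).2.2.2.1 n a ha b hb

theorem scheme_childdisj {n m : ℕ} (s : List ℕ) (h : n ≠ m) :
    Disjoint (scheme hZD hNC (n :: s)) (scheme hZD hNC (m :: s)) :=
  (splitD_spec hZD hNC (scheme_ne_clopen hZD hNC s).1 (scheme_ne_clopen hZD hNC s).2 s.length).2.2.2.2.1 h

theorem scheme_cover (s : List ℕ) : (⋃ n, scheme hZD hNC (n :: s)) = scheme hZD hNC s :=
  (splitD_spec hZD hNC (scheme_ne_clopen hZD hNC s).1 (scheme_ne_clopen hZD hNC s).2 s.length).2.2.2.2.2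

theorem scheme_disj : ∀ s t : List ℕ, s.length = t.length → s ≠ t →
    Disjoint (scheme hZD hNC s) (scheme hZD hNC t) := by
  intro s
  induction s with
  | nil =>
    intro t hlen hne
    cases t with
    | nil => exact absurd rfl hne
    | cons m t => simp at hlen
  | cons n s ih =>
    intro t hlen hne
    cases t with
    | nil => simp at hlen
    | cons m t =>
      by_cases hst : s = t
      · subst hst
        have hnm : n ≠ m := fun h => hne (by rw [h])
        exact scheme_childdisj hZD hNC s hnm
      · have : Disjoint (scheme hZD hNC s) (scheme hZD hNC t) := ih t (by simpa using hlen) hst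
        exact this.mono (scheme_sub hZD hNC n s) (scheme_sub hZD hNC m t)

open PiNat

theorem scheme_res_anti (x : ℕ → ℕ) {m n : ℕ} (h : m ≤ n) :
    scheme hZD hNC (res x n) ⊆ scheme hZD hNC (res x m) := by
  induction n with
  | zero => have : m = 0 := by omega
            subst this; exact fun a ha => ha
  | succ k ih =>
    rcases Nat.lt_or_ge m (k+1) with h' | h'
    · have := ih (by omega)
      rw [res_succ]
      exact (scheme_sub hZD hNC (x k) (res x k)).trans this
    · have : m = k + 1 := by omega
      subst this; exact fun a ha => ha

theorem scheme_res_dist (x : ℕ → ℕ) (k : ℕ) {a b : Z}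
    (ha : a ∈ scheme hZD hNC (res x (k+1))) (hb : b ∈ scheme hZD hNC (res x (k+1))) :
    dist a b ≤ (1/2)^k := by
  rw [res_succ] at ha hb
  have := scheme_dist hZD hNC (x k) (res x k) ha hb
  rwa [res_length] at this

/-- the point of the scheme hZD hNC along branch hZD hNC x -/
noncomputable def schemePt (x : ℕ → ℕ) : Z :=
  (cauchySeq_tendsto_of_complete (by
    apply cauchySeq_of_le_tendsto_0 (fun k : ℕ => (1/2 : ℝ)^k)
    · intro n m N hNn hNm
      apply scheme_res_dist hZD hNC x N
      · exact scheme_res_anti hZD hNC x (by omega) (scheme_ne_clopen hZD hNC (res x (n+1))).1.some_mem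
      · exact scheme_res_anti hZD hNC x (by omega) (scheme_ne_clopen hZD hNC (res x (m+1))).1.some_mem
    · exact tendsto_pow_atTop_nhds_zero_of_lt_one (by norm_num) (by norm_num)
    : CauchySeq (fun k : ℕ => (scheme_ne_clopen hZD hNC (res x (k+1))).1.some))).choose

theorem schemePt_mem (x : ℕ → ℕ) (n : ℕ) : schemePt hZD hNC x ∈ scheme hZD hNC (res x n) := by
  have htend := (cauchySeq_tendsto_of_complete (by
    apply cauchySeq_of_le_tendsto_0 (fun k : ℕ => (1/2 : ℝ)^k)
    · intro n m N hNn hNm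
      apply scheme_res_dist hZD hNC x N
      · exact scheme_res_anti hZD hNC x (by omega) (scheme_ne_clopen hZD hNC (res x (n+1))).1.some_mem
      · exact scheme_res_anti hZD hNC x (by omega) (scheme_ne_clopen hZD hNC (res x (m+1))).1.some_mem
    · exact tendsto_pow_atTop_nhds_zero_of_lt_one (by norm_num) (by norm_num)
    : CauchySeq (fun k : ℕ => (scheme_ne_clopen hZD hNC (res x (k+1))).1.some))).choose_spec
  apply (scheme_ne_clopen hZD hNC (res x n)).2.isClosed.mem_of_tendsto htend
  filter_upwards [Filter.eventually_ge_atTop n] with k hk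
  exact scheme_res_anti hZD hNC x (by omega) (scheme_ne_clopen hZD hNC (res x (k+1))).1.some_mem

theorem schemePt_unique {x : ℕ → ℕ} {a b : Z} (ha : ∀ n, a ∈ scheme hZD hNC (res x n))
    (hb : ∀ n, b ∈ scheme hZD hNC (res x n)) : a = b := by
  have hd : ∀ k : ℕ, dist a b ≤ (1/2)^k := fun k =>
    scheme_res_dist hZD hNC x k (ha (k+1)) (hb (k+1))
  have : dist a b ≤ 0 := by
    apply ge_of_tendsto' (tendsto_pow_atTop_nhds_zero_of_lt_one
      (by norm_num : (0:ℝ) ≤ 1/2) (by norm_num)) hd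
  exact dist_le_zero.1 this


theorem schemePt_injective : Function.Injective (schemePt hZD hNC) := by
  intro x y hxy
  by_contra hne
  set n := firstDiff x y with hn
  have hres : res x n = res y n := by
    rw [res_eq_res]
    intro m hm
    exact apply_eq_of_lt_firstDiff hm
  have h1 : schemePt hZD hNC x ∈ scheme hZD hNC (x n :: res x n) := by
    have := schemePt_mem hZD hNC (Z := Z) x (n+1)
    rwa [res_succ] at this
  have h2 : schemePt hZD hNC y ∈ scheme hZD hNC (y n :: res x n) := by
    have := schemePt_mem hZD hNC (Z := Z) y (n+1)
    rw [res_succ, ← hres] at this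
    exact this
  rw [hxy] at h1
  have hd : Disjoint (scheme hZD hNC (y n :: res x n)) (scheme hZD hNC (x n :: res x n)) :=
    scheme_childdisj hZD hNC _ (apply_firstDiff_ne hne).symm
  exact (disjoint_left.1 hd h2) h1

/-- pick a child index containing z -/
noncomputable def childIdx (z : Z) (s : List ℕ) : ℕ :=
  if h : z ∈ scheme hZD hNC s then
    (show ∃ n, z ∈ scheme hZD hNC (n :: s) by
      rw [← scheme_cover hZD hNC s] at h; exact mem_iUnion.1 h).choose
  else 0

theorem childIdx_spec {z : Z} {s : List ℕ} (h : z ∈ scheme hZD hNC s) :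
    z ∈ scheme hZD hNC (childIdx hZD hNC z s :: s) := by
  rw [childIdx, dif_pos h]
  exact (show ∃ n, z ∈ scheme hZD hNC (n :: s) by
      rw [← scheme_cover hZD hNC s] at h; exact mem_iUnion.1 h).choose_spec

/-- the branch hZD hNC through z -/
noncomputable def branchList (z : Z) : ℕ → List ℕ
  | 0 => []
  | n + 1 => childIdx hZD hNC z (branchList z n) :: branchList z n

theorem branchList_mem (z : Z) : ∀ n, z ∈ scheme hZD hNC (branchList hZD hNC z n)
  | 0 => mem_univ z
  | n + 1 => childIdx_spec hZD hNC (branchList_mem z n)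

noncomputable def branch (z : Z) : ℕ → ℕ := fun n => (branchList hZD hNC z (n+1)).headI

theorem res_branch (z : Z) : ∀ n, res (branch hZD hNC z) n = branchList hZD hNC z n
  | 0 => rfl
  | n + 1 => by
    rw [res_succ, res_branch z n]
    show (branchList hZD hNC z (n+1)).headI :: branchList hZD hNC z n = branchList hZD hNC z (n+1)
    rfl

theorem schemePt_surjective : Function.Surjective (schemePt hZD hNC) := by
  intro z
  refine ⟨branch hZD hNC z, ?_⟩
  apply schemePt_unique hZD hNC (x := branch hZD hNC z) (fun n => schemePt_mem hZD hNC _ n)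
  intro n
  rw [res_branch hZD hNC]
  exact branchList_mem hZD hNC z n

theorem schemePt_continuous : Continuous (schemePt hZD hNC) := by
  rw [continuous_iff_continuousAt]
  intro x
  rw [ContinuousAt, Metric.tendsto_nhds]
  intro ε hε
  obtain ⟨k, hk⟩ : ∃ k : ℕ, (1/2 : ℝ)^k < ε :=
    exists_pow_lt_of_lt_one hε (by norm_num)
  have hcyl : cylinder x (k+1) ∈ 𝓝 x :=
    (isOpen_cylinder (fun _ => ℕ) x (k+1)).mem_nhds (self_mem_cylinder x (k+1))
  filter_upwards [hcyl] with y hy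
  have hres : res y (k+1) = res x (k+1) := by
    rw [res_eq_res]
    intro m hm
    exact mem_cylinder_iff.1 hy m hm
  have h1 : schemePt hZD hNC y ∈ scheme hZD hNC (res x (k+1)) := by
    rw [← hres]; exact schemePt_mem hZD hNC y (k+1)
  have h2 : schemePt hZD hNC x ∈ scheme hZD hNC (res x (k+1)) := schemePt_mem hZD hNC x (k+1)
  exact lt_of_le_of_lt (scheme_res_dist hZD hNC x k h1 h2) hk

theorem schemePt_image_cylinder (x : ℕ → ℕ) (n : ℕ) :
    schemePt hZD hNC '' cylinder x n = scheme hZD hNC (res x n) := by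
  apply subset_antisymm
  · rintro _ ⟨y, hy, rfl⟩
    have : res y n = res x n := by
      rw [res_eq_res]; intro m hm; exact mem_cylinder_iff.1 hy m hm
    rw [← this]
    exact schemePt_mem hZD hNC y n
  · intro z hz
    obtain ⟨y, rfl⟩ := schemePt_surjective hZD hNC (Z := Z) z
    have hyn : res y n = res x n := by
      by_contra hne
      have hd : Disjoint (scheme hZD hNC (res y n)) (scheme hZD hNC (res x n)) :=
        scheme_disj hZD hNC _ _ (by rw [res_length, res_length]) hne
      exact (disjoint_left.1 hd (schemePt_mem hZD hNC y n)) hz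
    refine ⟨y, ?_, rfl⟩
    rw [mem_cylinder_iff]
    intro i hi
    exact res_eq_res.1 hyn hi

theorem schemePt_isOpenMap : IsOpenMap (schemePt hZD hNC) := by
  intro U hU
  rw [isOpen_iff_forall_mem_open]
  rintro _ ⟨x, hxU, rfl⟩
  obtain ⟨v, ⟨x', n, rfl⟩, hxv, hvU⟩ :=
    (isTopologicalBasis_cylinders (fun _ : ℕ => ℕ)).exists_subset_of_mem_open hxU hU
  have hcyl : cylinder x' n = cylinder x n := (mem_cylinder_iff_eq.1 hxv).symm
  rw [hcyl] at hvU
  refine ⟨scheme hZD hNC (res x n), ?_, (scheme_ne_clopen hZD hNC _).2.isOpen, ?_⟩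
  · rw [← schemePt_image_cylinder hZD hNC]
    exact image_mono hvU
  · rw [← schemePt_image_cylinder hZD hNC]
    exact ⟨x, self_mem_cylinder x n, rfl⟩

include hZD hNC in
theorem key_lemma : Nonempty (Z ≃ₜ (ℕ → ℕ)) := by
  refine ⟨(Equiv.toHomeomorphOfContinuousOpen
    (Equiv.ofBijective (schemePt hZD hNC)
      ⟨schemePt_injective hZD hNC, schemePt_surjective hZD hNC⟩)
    (schemePt_continuous hZD hNC) (schemePt_isOpenMap hZD hNC)).symm⟩

end Key

theorem ZeroDim.of_homeomorph {A B : Type*} [TopologicalSpace A] [TopologicalSpace B]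
    (e : A ≃ₜ B) (h : ZeroDim B) : ZeroDim A := by
  intro x U hU hxU
  obtain ⟨V, hV, hmem, hsub⟩ := h (e x) (e.symm ⁻¹' U) (hU.preimage e.symm.continuous)
    (by simpa using hxU)
  refine ⟨e ⁻¹' V, ⟨hV.1.preimage e.continuous, hV.2.preimage e.continuous⟩, hmem, ?_⟩
  intro a ha
  have := hsub ha
  simpa using this

theorem NowhereCompact.of_homeomorph {A B : Type*} [TopologicalSpace A] [TopologicalSpace B]
    (e : A ≃ₜ B) (h : NowhereCompact B) : NowhereCompact A := by
  intro U hU hne hK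
  apply h (e '' U) (e.isOpenMap U hU) (hne.image e)
  rw [← e.image_closure]
  exact hK.image e.continuous

theorem alexandroff_urysohn (Y : Type*) [TopologicalSpace Y] [Nonempty Y] :
    (PolishSpace Y ∧ ZeroDim Y ∧ NowhereCompact Y) ↔
      Nonempty (Y ≃ₜ {x : ℝ // Irrational x}) := by
  constructor
  · rintro ⟨hP, hZD, hNC⟩
    obtain ⟨e1⟩ : Nonempty (Y ≃ₜ (ℕ → ℕ)) := by
      letI := upgradeIsCompletelyMetrizable Y
      exact key_lemma hZD hNC
    obtain ⟨e2⟩ : Nonempty ({x : ℝ // Irrational x} ≃ₜ (ℕ → ℕ)) := by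
      letI m := upgradeIsCompletelyMetrizable {x : ℝ // Irrational x}
      exact @key_lemma _ m.toMetricSpace m.toCompleteSpace inferInstance
        zeroDim_irr nowhereCompact_irr _
    exact ⟨e1.trans e2.symm⟩
  · rintro ⟨e⟩
    exact ⟨e.isClosedEmbedding.polishSpace, ZeroDim.of_homeomorph e zeroDim_irr,
      NowhereCompact.of_homeomorph e nowhereCompact_irr⟩
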